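/- Let c₃ ≥ 0, c₁ ≠ 0, and c_e, c₂ ∈ ℝ. Suppose B: (R₀,∞) → (0,∞) satisfies the algebraic relation B(r)^{4c₃}·((c₃+1)·c_e·r⁻⁴ + c₁·B(r)⁴) = −c₂ for all r > R₀, and B(r) → b₀ > 0 as r → ∞. Then b₀^{4(c₃+1)} = −c₂/c₁, and lim_{r→∞} r⁴·(B(r) − b₀) = −c_e/(4 c₁ b₀³); i.e. B(r) = b₀ + b₄/r⁴ + o(r⁻⁴) with b₄ = −c_e/(4c₁b₀³). -/

import Mathlib

open Real Filter Topology Set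

/-- Let `c₃ ≥ 0`, `c₁ ≠ 0`. If `B : (R₀,∞) → (0,∞)` satisfies
`B^{4c₃}((c₃+1)c_e r⁻⁴ + c₁B⁴) = −c₂` and `B(r) → b₀ > 0` as `r → ∞`, then
`b₀^{4(c₃+1)} = −c₂/c₁` and `lim_{r→∞} r⁴(B(r) − b₀) = −c_e/(4c₁b₀³)`,
i.e. `B = b₀ + b₄/r⁴ + o(r⁻⁴)` with `b₄ = −c_e/(4c₁b₀³)`. -/
theorem B_asymptotic_expansion
    (c₃ c₁ c_e c₂ R₀ b₀ : ℝ) (hc₃ : 0 ≤ c₃) (hc₁ : c₁ ≠ 0) (hR₀ : 0 < R₀)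
    (B : ℝ → ℝ)
    (hBpos : ∀ r ∈ Ioi R₀, 0 < B r)
    (hrel : ∀ r ∈ Ioi R₀,
      B r ^ (4 * c₃) * ((c₃ + 1) * c_e * (r ^ 4)⁻¹ + c₁ * B r ^ 4) = -c₂)
    (hb₀ : 0 < b₀)
    (hlim : Tendsto B atTop (𝓝 b₀)) :
    b₀ ^ (4 * (c₃ + 1)) = -c₂ / c₁ ∧
    Tendsto (fun r : ℝ => r ^ 4 * (B r - b₀)) atTop (𝓝 (-c_e / (4 * c₁ * b₀ ^ 3))) := by
  set p : ℝ := 4 * c₃ + 4 with hpdef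
  have hp : (0:ℝ) < p := by positivity
  -- pow-splitting lemma for positive x
  have hsplit : ∀ x : ℝ, 0 < x → x ^ p = x ^ (4 * c₃) * x ^ 4 := by
    intro x hx
    rw [hpdef, Real.rpow_add hx, show ((4:ℝ) = ((4:ℕ):ℝ)) by norm_num, Real.rpow_natCast]
  -- limit of the relation
  have hinv : Tendsto (fun r : ℝ => (r ^ 4)⁻¹) atTop (𝓝 0) := by
    apply Tendsto.inv_tendsto_atTop
    exact tendsto_pow_atTop (by norm_num)
  have hBrpow : Tendsto (fun r => B r ^ (4 * c₃)) atTop (𝓝 (b₀ ^ (4 * c₃))) :=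
    hlim.rpow_const (Or.inl hb₀.ne')
  have hEv : ∀ᶠ r in atTop,
      B r ^ (4 * c₃) * ((c₃ + 1) * c_e * (r ^ 4)⁻¹ + c₁ * B r ^ 4) = -c₂ := by
    filter_upwards [eventually_gt_atTop R₀] with r hr using hrel r hr
  have hL : Tendsto (fun r => B r ^ (4 * c₃) * ((c₃ + 1) * c_e * (r ^ 4)⁻¹ + c₁ * B r ^ 4))
      atTop (𝓝 (b₀ ^ (4 * c₃) * ((c₃ + 1) * c_e * 0 + c₁ * b₀ ^ 4))) :=
    hBrpow.mul (((tendsto_const_nhds.mul hinv)).add (tendsto_const_nhds.mul (hlim.pow 4)))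
  have key : b₀ ^ (4 * c₃) * (c₁ * b₀ ^ 4) = -c₂ := by
    have := tendsto_nhds_unique ((tendsto_congr' hEv).mp hL) tendsto_const_nhds
    nlinarith [this]
  have hb0p : c₁ * b₀ ^ p = -c₂ := by
    rw [hsplit b₀ hb₀]; nlinarith [key]
  have part1 : b₀ ^ (4 * (c₃ + 1)) = -c₂ / c₁ := by
    have h4 : (4 * (c₃ + 1) : ℝ) = p := by rw [hpdef]; ring
    rw [h4]
    field_simp
    linarith [hb0p]
  refine ⟨part1, ?_⟩
  -- key difference identity for r > R₀
  have hdiff : ∀ r ∈ Ioi R₀,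
      c₁ * (B r ^ p - b₀ ^ p) = -((c₃ + 1) * c_e * (r ^ 4)⁻¹ * B r ^ (4 * c₃)) := by
    intro r hr
    have h1 := hrel r hr
    have h2 := hsplit (B r) (hBpos r hr)
    rw [h2]
    nlinarith [h1, hb0p]
  have hinj : ∀ r ∈ Ioi R₀, B r ^ p = b₀ ^ p → B r = b₀ := by
    intro r hr hpp
    have := congrArg (fun x : ℝ => x ^ p⁻¹) hpp
    simpa [← Real.rpow_mul (hBpos r hr).le, ← Real.rpow_mul hb₀.le,
      mul_inv_cancel₀ hp.ne'] using this
  by_cases hce : c_e = 0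
  · -- then B r = b₀ on Ioi R₀
    have hBeq : ∀ r ∈ Ioi R₀, B r = b₀ := by
      intro r hr
      have h := hdiff r hr
      rw [hce] at h
      apply hinj r hr
      have h0 : c₁ * (B r ^ p - b₀ ^ p) = 0 := by rw [h]; ring
      rcases mul_eq_zero.mp h0 with h' | h'
      · exact absurd h' hc₁
      · linarith
    have heq0 : (fun r : ℝ => r ^ 4 * (B r - b₀)) =ᶠ[atTop] (fun _ => 0) := by
      filter_upwards [eventually_gt_atTop R₀] with r hr
      rw [hBeq r hr]; ring
    rw [tendsto_congr' heq0, hce]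
    simp only [neg_zero, zero_div]; exact tendsto_const_nhds
  · -- c_e ≠ 0 : B r ≠ b₀ on Ioi R₀
    have hBne : ∀ r ∈ Ioi R₀, B r ≠ b₀ := by
      intro r hr heq
      have h := hdiff r hr
      rw [heq] at h
      have hr0 : (0:ℝ) < r := lt_trans hR₀ hr
      have h4 : (0:ℝ) < (r ^ 4)⁻¹ := by positivity
      have hA : (0:ℝ) < b₀ ^ (4 * c₃) := Real.rpow_pos_of_pos hb₀ _
      have h0 : (c₃ + 1) * c_e * (r ^ 4)⁻¹ * b₀ ^ (4 * c₃) = 0 := by linarith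
      rcases mul_eq_zero.mp h0 with h' | h'
      · rcases mul_eq_zero.mp h' with h'' | h''
        · rcases mul_eq_zero.mp h'' with h3 | h3
          · linarith
          · exact hce h3
        · linarith
      · linarith
    -- slope machinery
    have hder : HasDerivAt (fun x : ℝ => x ^ p) (p * b₀ ^ (p - 1)) b₀ :=
      Real.hasDerivAt_rpow_const (Or.inl hb₀.ne')
    have hBt : Tendsto B atTop (𝓝[≠] b₀) := by
      rw [tendsto_nhdsWithin_iff]
      exact ⟨hlim, by filter_upwards [eventually_gt_atTop R₀] with r hr using hBne r hr⟩
    have hSlope : Tendsto (fun r => slope (fun x : ℝ => x ^ p) b₀ (B r)) atTop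
        (𝓝 (p * b₀ ^ (p - 1))) :=
      (hasDerivAt_iff_tendsto_slope.mp hder).comp hBt
    -- the expression equals the closed form on Ioi R₀
    have hId : ∀ r ∈ Ioi R₀, r ^ 4 * (B r - b₀) =
        -((c₃ + 1) * c_e * B r ^ (4 * c₃)) / (c₁ * slope (fun x : ℝ => x ^ p) b₀ (B r)) := by
      intro r hr
      have hr0 : (0:ℝ) < r := lt_trans hR₀ hr
      have hD : B r - b₀ ≠ 0 := sub_ne_zero.mpr (hBne r hr)
      have h := hdiff r hr
      have hNne : B r ^ p - b₀ ^ p ≠ 0 := fun h0 =>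
        hBne r hr (hinj r hr (by linarith))
      rw [slope_def_field]
      have hr4 : (0:ℝ) < r ^ 4 := by positivity
      have hrr : (r ^ 4)⁻¹ * r ^ 4 = 1 := inv_mul_cancel₀ hr4.ne'
      have h' : c₁ * (B r ^ p - b₀ ^ p) * r ^ 4 = -((c₃ + 1) * c_e * B r ^ (4 * c₃)) := by
        linear_combination r ^ 4 * h - ((c₃ + 1) * c_e * B r ^ (4 * c₃)) * hrr
      rw [eq_div_iff (mul_ne_zero hc₁ (div_ne_zero hNne hD))]
      field_simp
      rw [mul_comm c₃ 4]; linear_combination h'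
    have hEq : (fun r : ℝ => r ^ 4 * (B r - b₀)) =ᶠ[atTop]
        (fun r => -((c₃ + 1) * c_e * B r ^ (4 * c₃)) /
          (c₁ * slope (fun x : ℝ => x ^ p) b₀ (B r))) := by
      filter_upwards [eventually_gt_atTop R₀] with r hr using hId r hr
    rw [tendsto_congr' hEq]
    have hden : c₁ * (p * b₀ ^ (p - 1)) ≠ 0 := by
      have : (0:ℝ) < b₀ ^ (p - 1) := Real.rpow_pos_of_pos hb₀ _
      positivity
    have hT : Tendsto (fun r => -((c₃ + 1) * c_e * B r ^ (4 * c₃)) /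
          (c₁ * slope (fun x : ℝ => x ^ p) b₀ (B r))) atTop
        (𝓝 (-((c₃ + 1) * c_e * b₀ ^ (4 * c₃)) / (c₁ * (p * b₀ ^ (p - 1))))) :=
      ((tendsto_const_nhds.mul hBrpow).neg).div (tendsto_const_nhds.mul hSlope) hden
    convert hT using 2
    have hsplit3 : b₀ ^ (p - 1) = b₀ ^ (4 * c₃) * b₀ ^ 3 := by
      have h3 : p - 1 = 4 * c₃ + 3 := by rw [hpdef]; ring
      rw [h3, Real.rpow_add hb₀, show ((3:ℝ) = ((3:ℕ):ℝ)) by norm_num, Real.rpow_natCast]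
    rw [hsplit3]
    have hA : b₀ ^ (4 * c₃) ≠ 0 := (Real.rpow_pos_of_pos hb₀ _).ne'
    have hb3 : b₀ ^ 3 ≠ 0 := by positivity
    rw [hpdef]
    field_simp
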